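/- arXiv:2411.03947 — 2 statements merged into one kernel-verified Lean document; each statement's English description precedes it below -/
import Mathlib

section
/- A semigroup S is right ideal Howson if and only if the semigroup S⁰ obtained from S by adjoining a zero element is right ideal Howson. -/
/-- `XS¹ = X ∪ XS` for a subset `X` of a semigroup `S`. -/
def RS1 {S : Type*} [Semigroup S] (X : Set S) : Set S :=
  X ∪ {y | ∃ x ∈ X, ∃ s : S, y = x * s}

/-- A finitely generated right ideal: a set of the form `XS¹` with `X` finite. -/
def FGRightIdeal {S : Type*} [Semigroup S] (I : Set S) : Prop :=
  ∃ X : Finset S, I = RS1 (↑X : Set S)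

/-- A semigroup is right ideal Howson if the intersection of any two finitely
generated right ideals is finitely generated. -/
def RIH (S : Type*) [Semigroup S] : Prop :=
  ∀ I J : Set S, FGRightIdeal I → FGRightIdeal J → FGRightIdeal (I ∩ J)

section Aux

variable {S : Type*} [Semigroup S]

lemma wz_coe_injective : Function.Injective (WithZero.coe : S → WithZero S) :=
  fun _ _ h => WithZero.coe_inj.mp h

lemma mem_RS1 {X : Set S} {y : S} : y ∈ RS1 X ↔ y ∈ X ∨ ∃ x ∈ X, ∃ s : S, y = x * s := by
  simp [RS1]

lemma RS1_empty : RS1 (∅ : Set S) = ∅ := by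
  simp [RS1]

/-- For a nonempty subset `Z` of `S⁰`, `ZS¹` is the coe-image of `Z'S¹` together with `0`,
where `Z'` is the set of nonzero elements of `Z` viewed in `S`. -/
lemma RS1_withZero {Z : Set (WithZero S)} (hZ : Z.Nonempty) :
    RS1 Z = (WithZero.coe '' RS1 {a : S | (a : WithZero S) ∈ Z}) ∪ {0} := by
  ext z
  constructor
  · intro hz
    rcases mem_RS1.mp hz with h | ⟨x, hx, s, rfl⟩
    · induction z using WithZero.recZeroCoe with
      | zero => exact Or.inr rfl
      | coe a => exact Or.inl ⟨a, mem_RS1.mpr (Or.inl h), rfl⟩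
    · induction x using WithZero.recZeroCoe with
      | zero => exact Or.inr (by simp)
      | coe a =>
        induction s using WithZero.recZeroCoe with
        | zero => exact Or.inr (by simp)
        | coe b =>
          exact Or.inl ⟨a * b, mem_RS1.mpr (Or.inr ⟨a, hx, b, rfl⟩), (WithZero.coe_mul a b)⟩
  · rintro (⟨a, ha, rfl⟩ | hz)
    · rcases mem_RS1.mp ha with h | ⟨x, hx, s, rfl⟩
      · exact mem_RS1.mpr (Or.inl h)
      · exact mem_RS1.mpr (Or.inr ⟨x, hx, s, WithZero.coe_mul x s⟩)
    · obtain ⟨w, hw⟩ := hZ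
      have : z = w * 0 := by rw [Set.mem_singleton_iff.mp hz]; simp
      exact mem_RS1.mpr (Or.inr ⟨w, hw, 0, this⟩)

/-- `RS1` of a coe-image together with 0. -/
lemma RS1_coe_image_union_zero (X : Set S) :
    RS1 (WithZero.coe '' X ∪ {0}) = (WithZero.coe '' RS1 X) ∪ {0} := by
  rw [RS1_withZero ⟨0, Or.inr rfl⟩]
  congr 2
  ext a
  simp [WithZero.coe_inj]

end Aux

theorem stmt5 {S : Type*} [Semigroup S] :
    RIH S ↔ RIH (WithZero S) := by
  classical
  constructor
  · intro h I J hI hJ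
    obtain ⟨X, rfl⟩ := hI
    obtain ⟨Y, rfl⟩ := hJ
    rcases X.eq_empty_or_nonempty with rfl | hX
    · exact ⟨∅, by simp [RS1_empty]⟩
    rcases Y.eq_empty_or_nonempty with rfl | hY
    · exact ⟨∅, by simp [RS1_empty]⟩
    rw [RS1_withZero (by exact_mod_cast hX.to_set), RS1_withZero (by exact_mod_cast hY.to_set)]
    set A : Set S := {a : S | (a : WithZero S) ∈ (X : Set (WithZero S))} with hA
    set B : Set S := {a : S | (a : WithZero S) ∈ (Y : Set (WithZero S))} with hB
    have hAfin : FGRightIdeal (RS1 A) :=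
      ⟨X.preimage (WithZero.coe : S → WithZero S) (wz_coe_injective.injOn), by
        congr 1; rw [Finset.coe_preimage]; rfl⟩
    have hBfin : FGRightIdeal (RS1 B) :=
      ⟨Y.preimage (WithZero.coe : S → WithZero S) (wz_coe_injective.injOn), by
        congr 1; rw [Finset.coe_preimage]; rfl⟩
    obtain ⟨Z, hZ⟩ := h _ _ hAfin hBfin
    have : (WithZero.coe '' RS1 A ∪ {0}) ∩ (WithZero.coe '' RS1 B ∪ {0})
        = WithZero.coe '' (RS1 A ∩ RS1 B) ∪ {0} := by
      rw [Set.image_inter wz_coe_injective]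
      ext z
      induction z using WithZero.recZeroCoe with
      | zero => simp
      | coe a => simp [WithZero.coe_inj]
    rw [this, hZ, ← RS1_coe_image_union_zero]
    exact ⟨insert 0 (Z.image WithZero.coe), by
      congr 1
      simp [Set.union_comm, Set.image_image]⟩
  · intro h I J hI hJ
    obtain ⟨X, rfl⟩ := hI
    obtain ⟨Y, rfl⟩ := hJ
    rcases X.eq_empty_or_nonempty with rfl | hX
    · exact ⟨∅, by simp [RS1_empty]⟩
    rcases Y.eq_empty_or_nonempty with rfl | hY
    · exact ⟨∅, by simp [RS1_empty]⟩
    have hIfg : FGRightIdeal (RS1 ((X.image (WithZero.coe : S → WithZero S)) : Set (WithZero S))) :=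
      ⟨X.image _, rfl⟩
    have hJfg : FGRightIdeal (RS1 ((Y.image (WithZero.coe : S → WithZero S)) : Set (WithZero S))) :=
      ⟨Y.image _, rfl⟩
    obtain ⟨W, hW⟩ := h _ _ hIfg hJfg
    have e1 : RS1 ((X.image (WithZero.coe : S → WithZero S)) : Set (WithZero S))
        = WithZero.coe '' RS1 (X : Set S) ∪ {0} := by
      rw [RS1_withZero]
      · congr 2
        ext a
        simp [WithZero.coe_inj]
      · obtain ⟨x, hx⟩ := hX
        exact ⟨(x : WithZero S), Finset.mem_coe.mpr (Finset.mem_image_of_mem _ hx)⟩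
    have e2 : RS1 ((Y.image (WithZero.coe : S → WithZero S)) : Set (WithZero S))
        = WithZero.coe '' RS1 (Y : Set S) ∪ {0} := by
      rw [RS1_withZero]
      · congr 2
        ext a
        simp [WithZero.coe_inj]
      · obtain ⟨y, hy⟩ := hY
        exact ⟨(y : WithZero S), Finset.mem_coe.mpr (Finset.mem_image_of_mem _ hy)⟩
    rw [e1, e2] at hW
    have hcap : WithZero.coe '' (RS1 (X : Set S) ∩ RS1 (Y : Set S)) ∪ {0}
        = RS1 ((W : Set (WithZero S))) := by
      rw [← hW, Set.image_inter wz_coe_injective]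
      ext z
      induction z using WithZero.recZeroCoe with
      | zero => simp
      | coe a => simp [WithZero.coe_inj]
    have hWne : (W : Set (WithZero S)).Nonempty := by
      by_contra hc
      rw [Set.not_nonempty_iff_eq_empty] at hc
      have : (0 : WithZero S) ∈ RS1 ((W : Set (WithZero S))) := by
        rw [← hcap]; exact Or.inr rfl
      rw [hc, RS1_empty] at this
      exact this
    rw [RS1_withZero hWne] at hcap
    set C : Set S := {a : S | (a : WithZero S) ∈ (W : Set (WithZero S))} with hC
    have heq : RS1 (X : Set S) ∩ RS1 (Y : Set S) = RS1 C := by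
      ext a
      have h0 : (a : WithZero S) ∈ WithZero.coe '' (RS1 (X : Set S) ∩ RS1 (Y : Set S)) ∪ {0}
          ↔ (a : WithZero S) ∈ WithZero.coe '' RS1 C ∪ {0} := by rw [hcap]
      simpa [WithZero.coe_inj] using h0
    rw [heq]
    exact ⟨W.preimage (WithZero.coe : S → WithZero S) (wz_coe_injective.injOn), by
      congr 1; rw [Finset.coe_preimage]; rfl⟩
end

section
/- Let S be a semigroup and T a large subsemigroup of S (i.e., S \ T is finite), and suppose that T is finitely right equated. Then S is finitely right equated if and only if the right annihilator congruence r_S(a) is finitely generated as a right congruence for each a ∈ S \ T. -/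
/-- The right annihilator congruence `r_S(a) = {(s,t) : a*s = a*t}`. -/
def rAnn {S : Type*} [Semigroup S] (a : S) : S → S → Prop :=
  fun s t => a * s = a * t

/-- A right congruence on a semigroup: an equivalence relation compatible with
right multiplication. -/
def IsRightCong {S : Type*} [Semigroup S] (ρ : S → S → Prop) : Prop :=
  Equivalence ρ ∧ ∀ a b s : S, ρ a b → ρ (a * s) (b * s)

/-- The smallest right congruence containing the relation `X`. -/
def rcGen {S : Type*} [Semigroup S] (X : S → S → Prop) : S → S → Prop :=
  fun a b => ∀ ρ : S → S → Prop, IsRightCong ρ → (∀ x y, X x y → ρ x y) → ρ a b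

/-- A right congruence is finitely generated if it is generated by a finite
set of pairs. -/
def FGRightCong {S : Type*} [Semigroup S] (ρ : S → S → Prop) : Prop :=
  ∃ X : Finset (S × S), ρ = rcGen (fun a b => (a, b) ∈ X)

/-- A semigroup is finitely right equated if every right annihilator
congruence is finitely generated. -/
def FRE (S : Type*) [Semigroup S] : Prop :=
  ∀ a : S, FGRightCong (rAnn a)

lemma rAnn_isRightCong {S : Type*} [Semigroup S] (a : S) : IsRightCong (rAnn a) :=
  ⟨⟨fun _ => rfl, fun h => h.symm, fun h1 h2 => h1.trans h2⟩,
   fun b c s h => by simp only [rAnn, ← mul_assoc] at *; rw [h]⟩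

lemma rcGen_isRightCong {S : Type*} [Semigroup S] (X : S → S → Prop) :
    IsRightCong (rcGen X) := by
  refine ⟨⟨?_, ?_, ?_⟩, ?_⟩
  · intro x ρ hρ _; exact hρ.1.refl x
  · intro x y h ρ hρ hX; exact hρ.1.symm (h ρ hρ hX)
  · intro x y z h1 h2 ρ hρ hX; exact hρ.1.trans (h1 ρ hρ hX) (h2 ρ hρ hX)
  · intro b c s h ρ hρ hX; exact hρ.2 b c s (h ρ hρ hX)

lemma rcGen_of_mem {S : Type*} [Semigroup S] {X : S → S → Prop} {x y : S}
    (h : X x y) : rcGen X x y := fun _ _ hX => hX x y h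

theorem stmt15 {S : Type*} [Semigroup S] (T : Subsemigroup S)
    (hfin : ((↑T : Set S)ᶜ).Finite) (hT : FRE ↥T) :
    FRE S ↔ ∀ a ∈ (↑T : Set S)ᶜ, FGRightCong (rAnn a) := by
  classical
  constructor
  · intro h a _; exact h a
  · intro h a
    by_cases hamem : a ∈ (↑T : Set S)ᶜ
    · exact h a hamem
    · have ha : a ∈ T := by simpa using hamem
      obtain ⟨X, hX⟩ := hT ⟨a, ha⟩
      -- representative: for f outside T, a T-element with the same annihilator action,
      -- if one exists
      set rep : S → S :=
        fun f => if hf : ∃ t : T, a * (t : S) = a * f then ((hf.choose : T) : S) else f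
        with hrepdef
      have hrep_ann : ∀ f, a * rep f = a * f := by
        intro f
        by_cases hf : ∃ t : T, a * (t : S) = a * f
        · simp only [hrepdef, dif_pos hf]; exact hf.choose_spec
        · simp only [hrepdef, dif_neg hf]
      have hrep_mem : ∀ f, (∃ t : T, a * (t : S) = a * f) → rep f ∈ T := by
        intro f hf
        simp only [hrepdef, dif_pos hf]
        exact (hf.choose).2
      set X' : Finset (S × S) := X.image (fun p => ((p.1 : S), (p.2 : S))) with hX'
      set Y1 : Finset (S × S) :=
        (hfin.toFinset ×ˢ hfin.toFinset).filter (fun p => a * p.1 = a * p.2) with hY1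
      set Y2 : Finset (S × S) := hfin.toFinset.image (fun f => (f, rep f)) with hY2
      refine ⟨X' ∪ Y1 ∪ Y2, ?_⟩
      set Z : S → S → Prop := fun x y => (x, y) ∈ X' ∪ Y1 ∪ Y2 with hZ
      -- every element of X is an rAnn-pair in T
      have hXann : ∀ p q : T, (p, q) ∈ X → a * (p : S) = a * (q : S) := by
        intro p q hpq
        have : rAnn (⟨a, ha⟩ : T) p q := by
          rw [hX]; exact rcGen_of_mem hpq
        have := congrArg (Subtype.val) this
        simpa using this
      -- generators are contained in rAnn a
      have hZsub : ∀ x y : S, Z x y → rAnn a x y := by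
        intro x y hxy
        simp only [hZ, Finset.mem_union] at hxy
        rcases hxy with (hxy | hxy) | hxy
        · simp only [hX', Finset.mem_image] at hxy
          obtain ⟨⟨p, q⟩, hpq, heq⟩ := hxy
          injection heq with h1 h2
          subst h1; subst h2
          exact hXann p q hpq
        · simp only [hY1, Finset.mem_filter] at hxy
          exact hxy.2
        · simp only [hY2, Finset.mem_image] at hxy
          obtain ⟨f, hf, heq⟩ := hxy
          injection heq with h1 h2
          subst h1; subst h2
          exact (hrep_ann f).symm
      -- pairs of elements of T related by rAnn a are in rcGen Z
      have hTpair : ∀ s t : S, (hs : s ∈ T) → (ht : t ∈ T) → a * s = a * t →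
          rcGen Z s t := by
        intro s t hs ht hst
        have hst' : rAnn (⟨a, ha⟩ : T) ⟨s, hs⟩ ⟨t, ht⟩ := Subtype.ext hst
        rw [hX] at hst'
        have := hst' (fun u v : T => rcGen Z (u : S) (v : S)) ?_ ?_
        · exact this
        · constructor
          · exact ⟨fun u => (rcGen_isRightCong Z).1.refl _,
              fun h => (rcGen_isRightCong Z).1.symm h,
              fun h1 h2 => (rcGen_isRightCong Z).1.trans h1 h2⟩
          · intro u v w hw
            have := (rcGen_isRightCong Z).2 (u : S) (v : S) (w : S) hw
            simpa using this
        · intro p q hpq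
          apply rcGen_of_mem
          simp only [hZ, Finset.mem_union, hX', Finset.mem_image]
          exact Or.inl (Or.inl ⟨(p, q), hpq, rfl⟩)
      funext s t
      apply propext
      constructor
      · intro hst
        by_cases hs : s ∈ T
        · by_cases ht : t ∈ T
          · exact hTpair s t hs ht hst
          · -- s ∈ T, t ∉ T : use rep t
            have hex : ∃ u : T, a * (u : S) = a * t := ⟨⟨s, hs⟩, hst⟩
            have h1 : rcGen Z t (rep t) := by
              apply rcGen_of_mem
              simp only [hZ, Finset.mem_union, hY2, Finset.mem_image]
              exact Or.inr ⟨t, hfin.mem_toFinset.2 ht, rfl⟩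
            have h2 : rcGen Z (rep t) s := by
              apply hTpair _ _ (hrep_mem t hex) hs
              rw [hrep_ann t]; exact hst.symm
            exact (rcGen_isRightCong Z).1.symm
              ((rcGen_isRightCong Z).1.trans h1 h2)
        · by_cases ht : t ∈ T
          · have hex : ∃ u : T, a * (u : S) = a * s := ⟨⟨t, ht⟩, hst.symm⟩
            have h1 : rcGen Z s (rep s) := by
              apply rcGen_of_mem
              simp only [hZ, Finset.mem_union, hY2, Finset.mem_image]
              exact Or.inr ⟨s, hfin.mem_toFinset.2 hs, rfl⟩
            have h2 : rcGen Z (rep s) t := by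
              apply hTpair _ _ (hrep_mem s hex) ht
              rw [hrep_ann s]; exact hst
            exact (rcGen_isRightCong Z).1.trans h1 h2
          · -- both outside T
            apply rcGen_of_mem
            simp only [hZ, Finset.mem_union, hY1, Finset.mem_filter, Finset.mem_product]
            exact Or.inl (Or.inr ⟨⟨hfin.mem_toFinset.2 hs, hfin.mem_toFinset.2 ht⟩, hst⟩)
      · intro hst
        exact hst (rAnn a) (rAnn_isRightCong a) hZsub
end
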